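/- In the polynomial ring ℤ[x,y], every element s of the ideal generated by x−1 and y−1 can be written uniquely in the form s = p(x)(x−1) + q(y)(y−1) + r(x,y)(x−1)(y−1) with p ∈ ℤ[x], q ∈ ℤ[y], and r ∈ ℤ[x,y]. -/
import Mathlib


open MvPolynomial

noncomputable section
abbrev R2 := MvPolynomial (Fin 2) ℤ

def myg1 : R2 →+* Polynomial ℤ := (aeval ![Polynomial.X, 1]).toRingHom
def myg2 : R2 →+* Polynomial ℤ := (aeval ![1, Polynomial.X]).toRingHom
def myPhi : R2 →+* Polynomial (Polynomial ℤ) :=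
  (aeval ![(Polynomial.C Polynomial.X : Polynomial (Polynomial ℤ)), Polynomial.X]).toRingHom
def myPsi : Polynomial (Polynomial ℤ) →+* R2 :=
  Polynomial.eval₂RingHom (Polynomial.eval₂RingHom (C : ℤ →+* R2) (X 0)) (X 1)

lemma psi_phi (t : R2) : myPsi (myPhi t) = t := by
  have : myPsi.comp myPhi = RingHom.id R2 := by
    apply MvPolynomial.ringHom_ext
    · intro a; simp [myPsi, myPhi]
    · intro i; fin_cases i <;> simp [myPsi, myPhi]
  exact congrFun (congrArg (·.toFun) this) t

lemma g1_eval (t : R2) : Polynomial.eval 1 (myPhi t) = myg1 t := by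
  have : (Polynomial.evalRingHom (1 : Polynomial ℤ)).comp myPhi = myg1 := by
    apply MvPolynomial.ringHom_ext
    · intro a; simp [myPhi, myg1]
    · intro i; fin_cases i <;> simp [myPhi, myg1]
  exact congrFun (congrArg (·.toFun) this) t

lemma g2_map (t : R2) : Polynomial.map (Polynomial.evalRingHom (1:ℤ)) (myPhi t) = myg2 t := by
  have : (Polynomial.mapRingHom (Polynomial.evalRingHom (1:ℤ))).comp myPhi = myg2 := by
    apply MvPolynomial.ringHom_ext
    · intro a; simp [myPhi, myg2]
    · intro i; fin_cases i <;> simp [myPhi, myg2]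
  exact congrFun (congrArg (·.toFun) this) t

lemma g1_aeval (p : Polynomial ℤ) : myg1 (Polynomial.aeval (X (0:Fin 2)) p) = p := by
  have : myg1.comp (Polynomial.aeval (X (0:Fin 2)) : Polynomial ℤ →ₐ[ℤ] R2).toRingHom
      = RingHom.id _ := by
    apply Polynomial.ringHom_ext <;> simp [myg1]
  exact congrFun (congrArg (·.toFun) this) p

lemma g2_aeval (q : Polynomial ℤ) : myg2 (Polynomial.aeval (X (1:Fin 2)) q) = q := by
  have : myg2.comp (Polynomial.aeval (X (1:Fin 2)) : Polynomial ℤ →ₐ[ℤ] R2).toRingHom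
      = RingHom.id _ := by
    apply Polynomial.ringHom_ext <;> simp [myg2]
  exact congrFun (congrArg (·.toFun) this) q
lemma key (t : R2) (h1 : myg1 t = 0) (h2 : myg2 t = 0) :
    ∃ r : R2, t = r * (X 0 - 1) * (X 1 - 1) := by
  have hroot : (Polynomial.X - Polynomial.C (1 : Polynomial ℤ)) ∣ myPhi t := by
    rw [Polynomial.dvd_iff_isRoot, Polynomial.IsRoot, g1_eval, h1]
  obtain ⟨w, hw⟩ := hroot
  have hmap : Polynomial.map (Polynomial.evalRingHom (1:ℤ)) (myPhi t) = 0 := by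
    rw [g2_map, h2]
  rw [hw, Polynomial.map_mul] at hmap
  have hXC : Polynomial.map (Polynomial.evalRingHom (1:ℤ))
      (Polynomial.X - Polynomial.C (1 : Polynomial ℤ)) = Polynomial.X - 1 := by
    simp
  rw [hXC] at hmap
  have hw0 : Polynomial.map (Polynomial.evalRingHom (1:ℤ)) w = 0 := by
    have hne : (Polynomial.X - 1 : Polynomial ℤ) ≠ 0 := by
      have := Polynomial.X_sub_C_ne_zero (1:ℤ)
      simpa using this
    rcases mul_eq_zero.mp hmap with h | h
    · exact absurd h hne
    · exact h
  have hdvd : Polynomial.C (Polynomial.X - Polynomial.C (1:ℤ)) ∣ w := by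
    rw [Polynomial.C_dvd_iff_dvd_coeff]
    intro i
    rw [Polynomial.dvd_iff_isRoot, Polynomial.IsRoot]
    have := congrArg (fun p => Polynomial.coeff p i) hw0
    simpa [Polynomial.coeff_map] using this
  obtain ⟨v, hv⟩ := hdvd
  refine ⟨myPsi v, ?_⟩
  have := congrArg myPsi hw
  rw [psi_phi, hv] at this
  rw [this]
  have e1 : myPsi (Polynomial.X - Polynomial.C (1 : Polynomial ℤ)) = X 1 - 1 := by
    simp [myPsi]
  have e2 : myPsi (Polynomial.C (Polynomial.X - Polynomial.C (1:ℤ))) = X 0 - 1 := by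
    simp [myPsi]
  rw [map_mul, map_mul, e1, e2]
  ring


/-- In `ℤ[x,y]`, every element of the ideal `(x−1, y−1)` has a unique expression
`p(x)(x−1) + q(y)(y−1) + r(x,y)(x−1)(y−1)` with `p ∈ ℤ[x]`, `q ∈ ℤ[y]`, `r ∈ ℤ[x,y]`. -/
theorem stmt6 (s : MvPolynomial (Fin 2) ℤ)
    (hs : s ∈ Ideal.span ({X 0 - 1, X 1 - 1} : Set (MvPolynomial (Fin 2) ℤ))) :
    ∃! pqr : Polynomial ℤ × Polynomial ℤ × MvPolynomial (Fin 2) ℤ,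
      s = Polynomial.aeval (X (0 : Fin 2)) pqr.1 * (X 0 - 1)
        + Polynomial.aeval (X (1 : Fin 2)) pqr.2.1 * (X 1 - 1)
        + pqr.2.2 * (X 0 - 1) * (X 1 - 1) := by
  -- evaluation at (1,1) kills s
  have hone : MvPolynomial.eval (fun _ => (1:ℤ)) s = 0 := by
    obtain ⟨c, d, rfl⟩ := Ideal.mem_span_pair.mp hs
    simp
  -- eval 1 of g1 s / g2 s is hone
  have hg1root : Polynomial.eval 1 (myg1 s) = 0 := by
    have : (Polynomial.evalRingHom (1:ℤ)).comp myg1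
        = (MvPolynomial.eval (fun _ => (1:ℤ)) : R2 →+* ℤ) := by
      apply MvPolynomial.ringHom_ext
      · intro a; simp [myg1]
      · intro i; fin_cases i <;> simp [myg1]
    have := congrFun (congrArg (·.toFun) this) s
    simpa using this.trans hone
  have hg2root : Polynomial.eval 1 (myg2 s) = 0 := by
    have : (Polynomial.evalRingHom (1:ℤ)).comp myg2
        = (MvPolynomial.eval (fun _ => (1:ℤ)) : R2 →+* ℤ) := by
      apply MvPolynomial.ringHom_ext
      · intro a; simp [myg2]
      · intro i; fin_cases i <;> simp [myg2]
    have := congrFun (congrArg (·.toFun) this) s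
    simpa using this.trans hone
  obtain ⟨p, hp⟩ : (Polynomial.X - Polynomial.C (1:ℤ)) ∣ myg1 s := by
    rw [Polynomial.dvd_iff_isRoot]; exact hg1root
  obtain ⟨q, hq⟩ : (Polynomial.X - Polynomial.C (1:ℤ)) ∣ myg2 s := by
    rw [Polynomial.dvd_iff_isRoot]; exact hg2root
  set t : R2 := s - Polynomial.aeval (X (0:Fin 2)) p * (X 0 - 1)
      - Polynomial.aeval (X (1:Fin 2)) q * (X 1 - 1) with ht
  have hg1vals : myg1 (X 0 - 1 : R2) = Polynomial.X - 1 ∧ myg1 (X 1 - 1 : R2) = 0 := by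
    constructor <;> simp [myg1]
  have hg2vals : myg2 (X 0 - 1 : R2) = 0 ∧ myg2 (X 1 - 1 : R2) = Polynomial.X - 1 := by
    constructor <;> simp [myg2]
  have ht1 : myg1 t = 0 := by
    rw [ht]
    simp only [map_sub, map_mul, g1_aeval, hg1vals.1, hg1vals.2, mul_zero, sub_zero]
    rw [hp]; ring_nf; simp [Polynomial.C_1]
  have ht2 : myg2 t = 0 := by
    rw [ht]
    simp only [map_sub, map_mul, g2_aeval, hg2vals.1, hg2vals.2, mul_zero, sub_zero, zero_mul]
    rw [hq]; ring_nf; simp [Polynomial.C_1]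
  obtain ⟨r, hr⟩ := key t ht1 ht2
  refine ⟨(p, q, r), ?_, ?_⟩
  · show s = _
    rw [ht] at hr
    linear_combination hr
  · rintro ⟨p', q', r'⟩ h'
    have heq : s = Polynomial.aeval (X (0 : Fin 2)) p * (X 0 - 1)
        + Polynomial.aeval (X (1 : Fin 2)) q * (X 1 - 1)
        + r * (X 0 - 1) * (X 1 - 1) := by
      rw [ht] at hr; linear_combination hr
    have hzero : Polynomial.aeval (X (0 : Fin 2)) (p' - p) * (X 0 - 1)
        + Polynomial.aeval (X (1 : Fin 2)) (q' - q) * (X 1 - 1)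
        + (r' - r) * (X 0 - 1) * (X 1 - 1) = 0 := by
      simp only [map_sub]
      linear_combination h'.symm.trans heq
    have hXne : (Polynomial.X - 1 : Polynomial ℤ) ≠ 0 := by
      have := Polynomial.X_sub_C_ne_zero (1:ℤ); simpa using this
    have hp' : p' = p := by
      have := congrArg myg1 hzero
      simp only [map_add, map_mul, map_sub, g1_aeval, hg1vals.1, hg1vals.2,
        mul_zero, add_zero, zero_add, zero_mul, map_zero] at this
      have := mul_eq_zero.mp this
      rcases this with h | h
      · exact sub_eq_zero.mp h
      · exact absurd h hXne
    have hq' : q' = q := by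
      have := congrArg myg2 hzero
      simp only [map_add, map_mul, map_sub, g2_aeval, hg2vals.1, hg2vals.2,
        mul_zero, add_zero, zero_add, zero_mul, map_zero] at this
      have := mul_eq_zero.mp this
      rcases this with h | h
      · exact sub_eq_zero.mp h
      · exact absurd h hXne
    have hr' : r' = r := by
      subst hp' hq'
      simp only [sub_self, map_zero, zero_mul, zero_add] at hzero
      have hx0 : (X 0 - 1 : R2) ≠ 0 := fun h => by
        have := congrArg myg1 h
        rw [hg1vals.1, map_zero] at this
        exact hXne this
      have hx1 : (X 1 - 1 : R2) ≠ 0 := fun h => by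
        have := congrArg myg2 h
        rw [hg2vals.2, map_zero] at this
        exact hXne this
      rcases mul_eq_zero.mp hzero with h | h
      · rcases mul_eq_zero.mp h with h | h
        · exact sub_eq_zero.mp h
        · exact absurd h hx0
      · exact absurd h hx1
    simp [hp', hq', hr', Prod.ext_iff]
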